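/- Let d ≥ 1 and t ≥ 1 be integers and σ > 0. Let A be a d×d real symmetric matrix, B a real d×t matrix, and K a t×t real symmetric matrix such that the (d+t)×(d+t) block matrix [[A, B], [Bᵀ, K]] is positive semidefinite. Let B' denote the d×(t−1) matrix formed by the first t−1 columns of B and K' the leading (t−1)×(t−1) principal submatrix of K. Then A − B (K + σ²I_t)⁻¹ Bᵀ ⪯ A − B' (K' + σ²I_{t−1})⁻¹ B'ᵀ in the Loewner order. -/

import Mathlib

open Matrix

section Aux

variable {d t s : ℕ}

/-- Inclusion matrix sending `Fin s` coordinates into `Fin t`. -/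
noncomputable def inclMat (h : s ≤ t) : Matrix (Fin t) (Fin s) ℝ :=
  Matrix.of fun i j => if i = Fin.castLE h j then 1 else 0

lemma mul_inclMat (h : s ≤ t) (B : Matrix (Fin d) (Fin t) ℝ) :
    B * inclMat h = B.submatrix id (Fin.castLE h) := by
  ext i j
  simp [Matrix.mul_apply, inclMat]

lemma inclMat_conj (h : s ≤ t) (M : Matrix (Fin t) (Fin t) ℝ) :
    (inclMat h)ᵀ * M * inclMat h = M.submatrix (Fin.castLE h) (Fin.castLE h) := by
  ext i j
  simp [Matrix.mul_apply, inclMat, Finset.mul_sum]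

lemma submatrix_smul_one' (h : s ≤ t) (c : ℝ) :
    ((c • (1 : Matrix (Fin t) (Fin t) ℝ)).submatrix (Fin.castLE h) (Fin.castLE h))
      = c • (1 : Matrix (Fin s) (Fin s) ℝ) := by
  ext i j
  by_cases hij : i = j <;>
    simp [Matrix.one_apply, hij, Fin.castLE_inj]

end Aux

/-- Schur-complement monotonicity under dropping the last query (Lemma B.4 of ZoRD):
if the block matrix `[[A, B], [Bᵀ, K]]` is PSD, then
`A − B (K + σ²I_t)⁻¹ Bᵀ ⪯ A − B' (K' + σ²I_{t−1})⁻¹ B'ᵀ` in the Loewner order,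
where `B'` consists of the first `t−1` columns of `B` and `K'` is the leading
`(t−1)×(t−1)` principal submatrix of `K`. -/
theorem posterior_covariance_monotone_drop_last
    (d t : ℕ) (hd : 1 ≤ d) (ht : 1 ≤ t) (σ : ℝ) (hσ : 0 < σ)
    (A : Matrix (Fin d) (Fin d) ℝ) (hA : A.IsHermitian)
    (B : Matrix (Fin d) (Fin t) ℝ)
    (K : Matrix (Fin t) (Fin t) ℝ) (hK : K.IsHermitian)
    (hblk : (Matrix.fromBlocks A B Bᵀ K).PosSemidef) :
    ((A - (B.submatrix id (Fin.castLE (Nat.sub_le t 1))) *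
        (K.submatrix (Fin.castLE (Nat.sub_le t 1)) (Fin.castLE (Nat.sub_le t 1))
          + σ ^ 2 • (1 : Matrix (Fin (t - 1)) (Fin (t - 1)) ℝ))⁻¹ *
        (B.submatrix id (Fin.castLE (Nat.sub_le t 1)))ᵀ)
      - (A - B * (K + σ ^ 2 • (1 : Matrix (Fin t) (Fin t) ℝ))⁻¹ * Bᵀ)).PosSemidef := by
  have h1 : t - 1 ≤ t := Nat.sub_le t 1
  set P : Matrix (Fin t) (Fin (t - 1)) ℝ := inclMat h1 with hP
  set Sg : Matrix (Fin t) (Fin t) ℝ := K + σ ^ 2 • (1 : Matrix (Fin t) (Fin t) ℝ) with hSg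
  -- K is PSD (principal block of a PSD matrix)
  have hKpsd : K.PosSemidef := by
    have h := hblk.submatrix (Sum.inr : Fin t → Fin d ⊕ Fin t)
    have he : (Matrix.fromBlocks A B Bᵀ K).submatrix
        (Sum.inr : Fin t → Fin d ⊕ Fin t) (Sum.inr : Fin t → Fin d ⊕ Fin t) = K := by
      ext i j; simp [Matrix.fromBlocks]
    rwa [he] at h
  have hpert : (σ ^ 2 • (1 : Matrix (Fin t) (Fin t) ℝ)).PosDef := by
    rw [Matrix.smul_one_eq_diagonal]
    exact Matrix.PosDef.diagonal fun _ => by positivity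
  have hSgpd : Sg.PosDef := by
    rw [hSg, add_comm]
    exact hpert.add_posSemidef hKpsd
  -- the small matrix S = K' + σ²I = Pᵀ Σ P is positive definite
  set S : Matrix (Fin (t - 1)) (Fin (t - 1)) ℝ :=
    K.submatrix (Fin.castLE h1) (Fin.castLE h1)
      + σ ^ 2 • (1 : Matrix (Fin (t - 1)) (Fin (t - 1)) ℝ) with hS
  have hSsub : S = Sg.submatrix (Fin.castLE h1) (Fin.castLE h1) := by
    ext i j
    by_cases hij : i = j <;>
      simp [hS, hSg, Matrix.one_apply, hij, Fin.castLE_inj]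
  have hSpd : S.PosDef := by
    have hpert' : (σ ^ 2 • (1 : Matrix (Fin (t - 1)) (Fin (t - 1)) ℝ)).PosDef := by
      rw [Matrix.smul_one_eq_diagonal]
      exact Matrix.PosDef.diagonal fun _ => by positivity
    rw [hS, add_comm]
    exact hpert'.add_posSemidef (hKpsd.submatrix _)
  have hSconj : Pᵀ * Sg * P = S := by rw [hSsub, inclMat_conj]
  have hSgherm : Sg.IsHermitian := hSgpd.isHermitian
  have hSgdet : IsUnit Sg.det := isUnit_iff_ne_zero.mpr hSgpd.det_pos.ne'
  -- the big block matrix [[S, PᵀΣ],[ΣP, Σ]] is PSD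
  have hbig : (Matrix.fromBlocks S (Pᵀ * Sg) (Sg * P) Sg).PosSemidef := by
    have h := hSgpd.posSemidef.mul_mul_conjTranspose_same
      (Matrix.fromRows Pᵀ (1 : Matrix (Fin t) (Fin t) ℝ))
    rw [Matrix.conjTranspose_eq_transpose_of_trivial, Matrix.transpose_fromRows,
      Matrix.transpose_transpose, Matrix.transpose_one, Matrix.fromRows_mul,
      Matrix.one_mul, Matrix.fromRows_mul_fromCols, Matrix.mul_one,
      Matrix.mul_one, hSconj] at h
    exact h
  -- Schur complement: Σ − ΣP S⁻¹ PᵀΣ is PSD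
  haveI : Invertible S := hSpd.isUnit.invertible
  have hSgsymm : Sgᵀ = Sg := by
    have := hSgherm.eq
    rwa [Matrix.conjTranspose_eq_transpose_of_trivial] at this
  have hherm : (Pᵀ * Sg)ᴴ = Sg * P := by
    rw [Matrix.conjTranspose_eq_transpose_of_trivial, Matrix.transpose_mul,
      Matrix.transpose_transpose, hSgsymm]
  have hschur : (Sg - (Pᵀ * Sg)ᴴ * S⁻¹ * (Pᵀ * Sg)).PosSemidef := by
    rw [← Matrix.PosDef.fromBlocks₁₁ (Pᵀ * Sg) Sg hSpd]
    rw [hherm]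
    exact hbig
  rw [hherm] at hschur
  -- conjugate by Σ⁻¹
  have key : Sg⁻¹ * (Sg - Sg * P * S⁻¹ * (Pᵀ * Sg)) * Sg⁻¹ = Sg⁻¹ - P * S⁻¹ * Pᵀ := by
    rw [Matrix.mul_sub, Matrix.sub_mul]
    congr 1
    · exact Matrix.mul_nonsing_inv_cancel_right _ _ hSgdet
    · simp only [← Matrix.mul_assoc]
      rw [Matrix.nonsing_inv_mul _ hSgdet, Matrix.one_mul,
        Matrix.mul_nonsing_inv_cancel_right _ _ hSgdet]
  have hM : (Sg⁻¹ - P * S⁻¹ * Pᵀ).PosSemidef := by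
    have h := hschur.mul_mul_conjTranspose_same Sg⁻¹
    have hinvherm : (Sg⁻¹)ᴴ = Sg⁻¹ := hSgherm.inv.eq
    rwa [hinvherm, key] at h
  -- conjugate by B and cancel the A's
  have hfinal := hM.mul_mul_conjTranspose_same B
  have hB' : B.submatrix id (Fin.castLE h1) = B * P := (mul_inclMat h1 B).symm
  have hBH : Bᴴ = Bᵀ := Matrix.conjTranspose_eq_transpose_of_trivial B
  have goal_eq :
      ((A - (B.submatrix id (Fin.castLE (Nat.sub_le t 1))) * S⁻¹ *
          (B.submatrix id (Fin.castLE (Nat.sub_le t 1)))ᵀ)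
        - (A - B * Sg⁻¹ * Bᵀ)) = B * (Sg⁻¹ - P * S⁻¹ * Pᵀ) * Bᴴ := by
    rw [hBH]
    rw [show B.submatrix id (Fin.castLE (Nat.sub_le t 1)) = B * P from hB']
    simp only [Matrix.transpose_mul, Matrix.mul_sub, Matrix.sub_mul, Matrix.mul_assoc]
    abel
  rw [hS] at goal_eq
  rw [goal_eq]
  exact hfinal
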